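/- Let K ≥ 1 and let h = (α, β) ∈ ℤ^{2K} be a nonzero vector with α_i = ∑_{j=1}^{i} β_j for all i. Then h can be written as a finite sum h = g^1 + ... + g^M where each g^t = (α^t, β^t) satisfies α^t_i = ∑_{j≤i} β^t_j for all i, g^t ⊑ h in the conformal order, ‖g^t‖_1 ≤ K+1, and ‖β^t‖_1 ≤ 2. -/

import Mathlib

open Finset

lemma conf_trans {x y z : ℤ} (h1 : 0 ≤ x * y) (h2 : |x| ≤ |y|)
    (h3 : 0 ≤ y * z) (h4 : |y| ≤ |z|) : 0 ≤ x * z ∧ |x| ≤ |z| := by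
  refine ⟨?_, le_trans h2 h4⟩
  rcases eq_or_ne x 0 with rfl | hx
  · simp
  · have hy : y ≠ 0 := by
      intro h; rw [h, abs_zero] at h2
      exact hx (abs_eq_zero.mp (le_antisymm h2 (abs_nonneg x)))
    nlinarith [mul_nonneg h1 h3, sq_nonneg y, mul_self_pos.mpr hy]

lemma unit_conf {s x : ℤ} (hs : s = 1 ∨ s = -1) (h : 1 ≤ s * x) : 0 ≤ s * x ∧ |s| ≤ |x| := by
  rcases hs with rfl | rfl
  · simp only [one_mul] at h ⊢
    exact ⟨by linarith, by rw [abs_one, abs_of_pos (by linarith)]; linarith⟩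
  · have : x ≤ -1 := by linarith
    constructor
    · linarith
    · rw [abs_of_nonpos (by linarith : (-1:ℤ) ≤ 0), abs_of_neg (by linarith : x < 0)]; linarith

lemma sub_conf {s x : ℤ} (hs : s = 1 ∨ s = -1) (h : 1 ≤ s * x) :
    0 ≤ (x - s) * x ∧ |x - s| ≤ |x| ∧ |x - s| = |x| - 1 := by
  rcases hs with rfl | rfl
  · have h1 : 1 ≤ x := by linarith
    have e : |x - 1| = x - 1 := abs_of_nonneg (by linarith)
    have e2 : |x| = x := abs_of_nonneg (by linarith)
    exact ⟨by nlinarith, by rw [e, e2]; linarith, by rw [e, e2]⟩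
  · have h1 : x ≤ -1 := by linarith
    have e : |x - (-1)| = -(x + 1) := by rw [abs_of_nonpos (by linarith)]; ring
    have e2 : |x| = -x := abs_of_nonpos (by linarith)
    refine ⟨by nlinarith, by rw [e, e2]; linarith, by rw [e, e2]; ring⟩

lemma beta_eq {K : ℕ} {α β : Fin K → ℤ} (hps : ∀ i, α i = ∑ j ∈ Iic i, β j)
    (i : Fin K) :
    β i = α i - (if _ : 0 < i.val then α ⟨i.val - 1, lt_of_le_of_lt (Nat.sub_le _ _) i.isLt⟩ else 0) := by
  by_cases h : 0 < i.val
  · set i' : Fin K := ⟨i.val - 1, lt_of_le_of_lt (Nat.sub_le _ _) i.isLt⟩ with hi'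
    have hins : Iic i = insert i (Iic i') := by
      ext j
      simp only [mem_Iic, mem_insert, Fin.le_def, Fin.ext_iff, hi']
      omega
    have hnot : i ∉ Iic i' := by
      simp only [mem_Iic, Fin.le_def, hi']
      omega
    have := hps i
    rw [hins, Finset.sum_insert hnot, ← hps i'] at this
    simp only [h, dif_pos]
    linarith
  · have hsingle : Iic i = {i} := by
      ext j
      simp only [mem_Iic, mem_singleton, Fin.le_def, Fin.ext_iff]
      omega
    have := hps i
    rw [hsingle, Finset.sum_singleton] at this
    simp only [h, dif_neg, not_false_iff]
    linarith

lemma auxdec (K : ℕ) : ∀ (N : ℕ) (α β : Fin K → ℤ),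
    (∑ i, |α i|) ≤ (N : ℤ) →
    (∀ i, α i = ∑ j ∈ Iic i, β j) →
    ∃ (M : ℕ) (a b : Fin M → Fin K → ℤ),
      (∀ i, α i = ∑ t, a t i) ∧ (∀ i, β i = ∑ t, b t i) ∧
      ∀ t, (∀ i, a t i = ∑ j ∈ Finset.Iic i, b t j) ∧
           (∀ i, 0 ≤ a t i * α i ∧ |a t i| ≤ |α i|) ∧
           (∀ i, 0 ≤ b t i * β i ∧ |b t i| ≤ |β i|) ∧
           ((∑ i, |a t i|) + (∑ i, |b t i|) ≤ (K : ℤ) + 1) ∧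
           ((∑ i, |b t i|) ≤ 2) := by
  intro N
  induction N with
  | zero =>
    intro α β hN hps
    have hα : ∀ i, α i = 0 := by
      intro i
      have h1 : |α i| ≤ 0 := by
        have := Finset.single_le_sum (f := fun i => |α i|) (fun j _ => abs_nonneg (α j)) (mem_univ i)
        -- sum ≤ 0
        have h0 : (∑ i, |α i|) ≤ 0 := by exact_mod_cast hN
        linarith
      exact abs_eq_zero.mp (le_antisymm h1 (abs_nonneg _))
    have hβ : ∀ i, β i = 0 := by
      intro i
      have := beta_eq hps i
      by_cases h : 0 < i.val <;> simp [h, hα] at this <;> exact this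
    refine ⟨0, Fin.elim0, Fin.elim0, ?_, ?_, fun t => t.elim0⟩
    · intro i; simp [hα i]
    · intro i; simp [hβ i]
  | succ N ih =>
    intro α β hN hps
    by_cases hz : ∀ i, α i = 0
    · have hβ : ∀ i, β i = 0 := by
        intro i
        have := beta_eq hps i
        by_cases h : 0 < i.val <;> simp [h, hz] at this <;> exact this
      refine ⟨0, Fin.elim0, Fin.elim0, ?_, ?_, fun t => t.elim0⟩
      · intro i; simp [hz i]
      · intro i; simp [hβ i]
    · push_neg at hz
      obtain ⟨i0, hi0⟩ := hz
      -- minimal p with α p ≠ 0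
      have hPex : ∃ n, ∃ h : n < K, α ⟨n, h⟩ ≠ 0 := ⟨i0.val, i0.isLt, by simpa using hi0⟩
      classical
      set p := Nat.find hPex with hp
      obtain ⟨hpK, hαp⟩ := Nat.find_spec hPex
      have hmin : ∀ m (h : m < K), m < p → α ⟨m, h⟩ = 0 := by
        intro m h hm
        by_contra hc
        exact Nat.find_min hPex hm ⟨h, hc⟩
      set pF : Fin K := ⟨p, hpK⟩ with hpF
      have hpFval : (pF : ℕ) = p := rfl
      set s : ℤ := if 0 < α pF then 1 else -1 with hsdef
      have hs : s = 1 ∨ s = -1 := by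
        rw [hsdef]; split <;> simp
      have hsp : 1 ≤ s * α pF := by
        rw [hsdef]; split
        · rename_i h; simp only [one_mul]; omega
        · rename_i h
          have : α pF ≤ -1 := by
            rcases lt_trichotomy (α pF) 0 with h1 | h1 | h1
            · omega
            · exact absurd h1 hαp
            · exact absurd h1 h
          nlinarith
      -- r : first index > p where sign run ends (or K)
      have hQex : ∃ n, p < n ∧ (K ≤ n ∨ ∃ h : n < K, s * α ⟨n, h⟩ ≤ 0) :=
        ⟨K, hpK, Or.inl le_rfl⟩
      set r := Nat.find hQex with hr
      obtain ⟨hpr, hrspec⟩ := Nat.find_spec hQex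
      have hrK : r ≤ K := Nat.find_min' hQex ⟨hpK, Or.inl le_rfl⟩
      have hpltr : p < r := hpr
      have hmid : ∀ n (h : n < K), p ≤ n → n < r → 1 ≤ s * α ⟨n, h⟩ := by
        intro n h hpn hnr
        rcases eq_or_lt_of_le hpn with rfl | hlt
        · exact hsp
        · have := Nat.find_min hQex hnr
          push_neg at this
          obtain ⟨hKn, h2⟩ := this hlt
          have := h2 h
          omega
      -- definitions of the strand
      set A : Fin K → ℤ := fun i => if p ≤ i.val ∧ i.val < r then s else 0 with hA
      set B : Fin K → ℤ := fun i => if i.val = p then s else if i.val = r then -s else 0 with hB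
      set α' : Fin K → ℤ := fun i => α i - A i with hα'
      set β' : Fin K → ℤ := fun i => β i - B i with hβ'
      -- prefix sums of B
      have hBsum : ∀ i : Fin K, (∑ j ∈ Iic i, B j) = A i := by
        intro i
        have hsplit : ∀ j : Fin K, B j =
            (if j = pF then s else 0) + (if j.val = r then -s else 0) := by
          intro j
          rw [hB]
          simp only [Fin.ext_iff, hpFval]
          split_ifs with h1 h2 h3 <;> (try ring) <;> (exfalso; omega)
        rw [Finset.sum_congr rfl (fun j _ => hsplit j), Finset.sum_add_distrib]
        have h1 : (∑ j ∈ Iic i, if j = pF then s else 0) = if p ≤ i.val then s else 0 := by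
          rw [Finset.sum_ite_eq' (Iic i) pF (fun _ => s)]
          simp [mem_Iic, Fin.le_def, hpFval]
        rw [h1]
        by_cases hrK' : r < K
        · set rF : Fin K := ⟨r, hrK'⟩ with hrF
          have hrFval : (rF : ℕ) = r := rfl
          have h2 : (∑ j ∈ Iic i, if j.val = r then -s else 0)
              = ∑ j ∈ Iic i, if j = rF then -s else 0 := by
            apply Finset.sum_congr rfl
            intro j _
            simp [Fin.ext_iff, hrFval]
          rw [h2, Finset.sum_ite_eq' (Iic i) rF (fun _ => -s)]
          simp only [mem_Iic, Fin.le_def, hrFval, hpFval, hA]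
          split_ifs <;> (try ring) <;> (exfalso; omega)
        · have hrEq : r = K := by omega
          have h2 : (∑ j ∈ Iic i, if j.val = r then -s else 0) = 0 := by
            apply Finset.sum_eq_zero
            intro j _
            have : j.val < K := j.isLt
            rw [if_neg (by omega)]
          rw [h2, hA]
          simp only [hpFval]
          have : i.val < r := by have := i.isLt; omega
          split_ifs <;> (try ring) <;> (exfalso; omega)
      have hps' : ∀ i, α' i = ∑ j ∈ Iic i, β' j := by
        intro i
        rw [hα', hβ']
        simp only
        rw [Finset.sum_sub_distrib, ← hps i, hBsum i]
      have habs_s : |s| = 1 := by rcases hs with h | h <;> simp [h]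
      have hs' : -s = 1 ∨ -s = -1 := by rcases hs with h | h <;> simp [h]
      -- conformality facts
      have hconfA2 : ∀ i : Fin K, 0 ≤ A i * α i ∧ |A i| ≤ |α i| := by
        intro i
        simp only [hA]
        split_ifs with h
        · exact unit_conf hs (hmid i.val i.isLt h.1 h.2)
        · simp
      have hconfα' : ∀ i : Fin K, 0 ≤ α' i * α i ∧ |α' i| ≤ |α i| := by
        intro i
        simp only [hα', hA]
        split_ifs with h
        · have h1 := hmid i.val i.isLt h.1 h.2
          exact ⟨(sub_conf hs h1).1, (sub_conf hs h1).2.1⟩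
        · constructor
          · simpa using mul_self_nonneg (α i)
          · simp
      have habs : ∀ i : Fin K, |α' i| = |α i| - |A i| := by
        intro i
        simp only [hα', hA]
        split_ifs with h
        · have h1 := hmid i.val i.isLt h.1 h.2
          rw [habs_s]
          exact (sub_conf hs h1).2.2
        · simp
      -- β at p and r
      have hpfacts : ∀ i : Fin K, (i : ℕ) = p → β i = α i := by
        intro i hip
        have e := beta_eq hps i
        by_cases h : 0 < (i : ℕ)
        · rw [dif_pos h] at e
          rw [hmin ((i:ℕ)-1) (lt_of_le_of_lt (Nat.sub_le _ _) i.isLt) (by omega)] at e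
          linarith
        · rw [dif_neg h] at e
          linarith
      have hspB : ∀ i : Fin K, (i : ℕ) = p → 1 ≤ s * β i := by
        intro i hip
        have : i = pF := Fin.ext (by rw [hip, hpFval])
        rw [hpfacts i hip, this]
        exact hsp
      have hrfacts : ∀ i : Fin K, (i : ℕ) = r → 1 ≤ (-s) * β i := by
        intro i hir
        have hrK' : r < K := hir ▸ i.isLt
        have hsαr : s * α i ≤ 0 := by
          rcases hrspec with h | ⟨hh, h2⟩
          · exfalso; omega
          · have : i = ⟨Nat.find hQex, hh⟩ := Fin.ext (by rw [hir, hr])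
            rw [this]
            exact h2
        have hrm : r - 1 < K := by omega
        have hmidr : 1 ≤ s * α ⟨r-1, hrm⟩ := hmid (r-1) hrm (by omega) (by omega)
        have e := beta_eq hps i
        rw [dif_pos (by omega : 0 < (i:ℕ))] at e
        have emk : (⟨(i:ℕ)-1, lt_of_le_of_lt (Nat.sub_le _ _) i.isLt⟩ : Fin K)
            = ⟨r-1, hrm⟩ := Fin.ext (by simp [hir])
        rw [emk] at e
        have h3 : -s * β i = s * α ⟨r-1, hrm⟩ - s * α i := by rw [e]; ring
        linarith [h3, hmidr, hsαr]
      have hconfB : ∀ i : Fin K, 0 ≤ B i * β i ∧ |B i| ≤ |β i| := by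
        intro i
        simp only [hB]
        split_ifs with h1 h2
        · exact unit_conf hs (hspB i h1)
        · exact unit_conf hs' (hrfacts i h2)
        · simp
      have hconfβ' : ∀ i : Fin K, 0 ≤ β' i * β i ∧ |β' i| ≤ |β i| := by
        intro i
        simp only [hβ', hB]
        split_ifs with h1 h2
        · have h1b := hspB i h1
          exact ⟨(sub_conf hs h1b).1, (sub_conf hs h1b).2.1⟩
        · have h1b := hrfacts i h2
          exact ⟨(sub_conf hs' h1b).1, (sub_conf hs' h1b).2.1⟩
        · constructor
          · simpa using mul_self_nonneg (β i)
          · simp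
      -- measure decrease
      have hsum' : (∑ i, |α' i|) ≤ (N : ℤ) := by
        have h1 : (∑ i, |α' i|) = (∑ i, |α i|) - ∑ i, |A i| := by
          rw [← Finset.sum_sub_distrib]
          exact Finset.sum_congr rfl fun i _ => habs i
        have h2 : (1:ℤ) ≤ ∑ i, |A i| := by
          have hApF : |A pF| = 1 := by
            simp only [hA]
            rw [if_pos (by constructor <;> omega)]
            exact habs_s
          calc (1:ℤ) = |A pF| := hApF.symm
            _ ≤ ∑ i, |A i| := Finset.single_le_sum (fun j _ => abs_nonneg (A j)) (mem_univ pF)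
        push_cast at hN ⊢
        linarith
      -- norm bounds for the strand
      have hAabs : ∀ i : Fin K, |A i| = if p ≤ (i:ℕ) ∧ (i:ℕ) < r then 1 else 0 := by
        intro i
        simp only [hA]
        split_ifs
        · exact habs_s
        · exact abs_zero
      have hAle1 : ∀ i : Fin K, |A i| ≤ 1 := by
        intro i
        rw [hAabs i]
        split_ifs <;> norm_num
      have hBabs : ∀ i : Fin K, |B i| =
          (if (i:ℕ) = p then 1 else 0) + (if (i:ℕ) = r then 1 else 0) := by
        intro i
        simp only [hB]
        split_ifs with h1 h2 <;> (try (exfalso; omega)) <;> simp [abs_neg, habs_s]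
      have hsump : (∑ i : Fin K, if (i:ℕ) = p then (1:ℤ) else 0) = 1 := by
        have : ∀ i : Fin K, (if (i:ℕ) = p then (1:ℤ) else 0) = if i = pF then 1 else 0 := by
          intro i
          simp [Fin.ext_iff, hpFval]
        rw [Finset.sum_congr rfl fun i _ => this i,
          Finset.sum_ite_eq' univ pF (fun _ => (1:ℤ))]
        simp
      have hboundB : (∑ i, |B i|) ≤ 2 ∧ (∑ i, |A i|) + (∑ i, |B i|) ≤ (K:ℤ) + 1 := by
        have hBsum2 : (∑ i, |B i|) = 1 + ∑ i : Fin K, (if (i:ℕ) = r then (1:ℤ) else 0) := by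
          rw [Finset.sum_congr rfl fun i _ => hBabs i, Finset.sum_add_distrib, hsump]
        by_cases hrK' : r < K
        · set rF : Fin K := ⟨r, hrK'⟩ with hrF
          have hrFval : (rF : ℕ) = r := rfl
          have hsumr : (∑ i : Fin K, if (i:ℕ) = r then (1:ℤ) else 0) = 1 := by
            have : ∀ i : Fin K, (if (i:ℕ) = r then (1:ℤ) else 0) = if i = rF then 1 else 0 := by
              intro i
              simp [Fin.ext_iff, hrFval]
            rw [Finset.sum_congr rfl fun i _ => this i,
              Finset.sum_ite_eq' univ rF (fun _ => (1:ℤ))]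
            simp
          have hBval : (∑ i, |B i|) = 2 := by rw [hBsum2, hsumr]; norm_num
          have hAzero : |A rF| = 0 := by
            rw [hAabs rF]
            rw [if_neg (by rw [hrFval]; omega)]
          have hAbound : (∑ i, |A i|) ≤ (K:ℤ) - 1 := by
            rw [← Finset.sum_erase (f := fun i => |A i|) univ hAzero]
            calc (∑ i ∈ univ.erase rF, |A i|) ≤ (univ.erase rF).card • (1:ℤ) :=
                  Finset.sum_le_card_nsmul _ _ 1 (fun i _ => hAle1 i)
              _ = ((univ.erase rF).card : ℤ) := by simp
              _ = (K:ℤ) - 1 := by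
                  rw [Finset.card_erase_of_mem (mem_univ rF)]
                  simp only [Finset.card_univ, Fintype.card_fin]
                  have : 1 ≤ K := by omega
                  push_cast [Nat.cast_sub this]
                  ring
          constructor
          · rw [hBval]
          · rw [hBval]; linarith
        · have hsumr : (∑ i : Fin K, if (i:ℕ) = r then (1:ℤ) else 0) = 0 := by
            apply Finset.sum_eq_zero
            intro i _
            rw [if_neg (by have := i.isLt; omega)]
          have hBval : (∑ i, |B i|) = 1 := by rw [hBsum2, hsumr]; norm_num
          have hAbound : (∑ i, |A i|) ≤ (K:ℤ) := by
            calc (∑ i, |A i|) ≤ (univ : Finset (Fin K)).card • (1:ℤ) :=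
                  Finset.sum_le_card_nsmul _ _ 1 (fun i _ => hAle1 i)
              _ = (K:ℤ) := by simp
          constructor
          · rw [hBval]; norm_num
          · rw [hBval]; linarith
      -- apply the induction hypothesis
      obtain ⟨M, a', b', hsa, hsb, hprop⟩ := ih α' β' hsum' hps'
      refine ⟨M+1, Fin.cons A a', Fin.cons B b', ?_, ?_, ?_⟩
      · intro i
        rw [Fin.sum_univ_succ]
        simp only [Fin.cons_zero, Fin.cons_succ]
        have := hsa i
        rw [hα'] at this
        simp only at this
        linarith [this]
      · intro i
        rw [Fin.sum_univ_succ]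
        simp only [Fin.cons_zero, Fin.cons_succ]
        have := hsb i
        rw [hβ'] at this
        simp only at this
        linarith [this]
      · intro t
        refine Fin.cases ?_ ?_ t
        · simp only [Fin.cons_zero]
          exact ⟨fun i => (hBsum i).symm, hconfA2, hconfB, hboundB.2, hboundB.1⟩
        · intro t'
          simp only [Fin.cons_succ]
          obtain ⟨hp1, hp2, hp3, hp4, hp5⟩ := hprop t'
          refine ⟨hp1, ?_, ?_, hp4, hp5⟩
          · intro i
            exact conf_trans (hp2 i).1 (hp2 i).2 (hconfα' i).1 (hconfα' i).2
          · intro i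
            exact conf_trans (hp3 i).1 (hp3 i).2 (hconfβ' i).1 (hconfβ' i).2

theorem stmt10 (K : ℕ) (hK : 1 ≤ K) (α β : Fin K → ℤ)
    (hps : ∀ i, α i = ∑ j ∈ Finset.Iic i, β j)
    (hnz : ¬(α = 0 ∧ β = 0)) :
    ∃ (M : ℕ) (a b : Fin M → Fin K → ℤ),
      (∀ i, α i = ∑ t, a t i) ∧ (∀ i, β i = ∑ t, b t i) ∧
      ∀ t, (∀ i, a t i = ∑ j ∈ Finset.Iic i, b t j) ∧
           (∀ i, 0 ≤ a t i * α i ∧ |a t i| ≤ |α i|) ∧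
           (∀ i, 0 ≤ b t i * β i ∧ |b t i| ≤ |β i|) ∧
           ((∑ i, |a t i|) + (∑ i, |b t i|) ≤ (K : ℤ) + 1) ∧
           ((∑ i, |b t i|) ≤ 2) := by
  exact auxdec K (∑ i, |α i|).toNat α β (by
    rw [Int.toNat_of_nonneg (Finset.sum_nonneg fun i _ => abs_nonneg (α i))]) hps
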